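/- Let t, k, n be integers with t ≥ 0, k ≥ 1 and n ≥ 2k+t. Let ℱ ⊆ C([n], k+t) and 𝒢 ⊆ C([n], k) be cross-intersecting families. If ℱ is t-intersecting, then |ℱ| + |𝒢| ≤ C(n, k). -/

import Mathlib

open Finset

namespace Frankl

def IsShiftedUp (n : ℕ) (ℱ : Finset (Finset ℕ)) : Prop :=
  ∀ a b, 1 ≤ a → a < b → b ≤ n → ∀ F ∈ ℱ, a ∈ F → b ∉ F → insert b (F.erase a) ∈ ℱ

/-- number of elements of `A` in `[1, v]`. -/
def cc (A : Finset ℕ) (v : ℕ) : ℕ := (A ∩ Icc 1 v).card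

lemma cc_mono (A : Finset ℕ) {v w : ℕ} (h : v ≤ w) : cc A v ≤ cc A w :=
  card_le_card (inter_subset_inter Subset.rfl (Icc_subset_Icc le_rfl h))

lemma cc_le_self (A : Finset ℕ) (v : ℕ) : cc A v ≤ v := by
  have : (A ∩ Icc 1 v).card ≤ (Icc 1 v).card := card_le_card inter_subset_right
  simpa [cc, Nat.card_Icc] using this

lemma cc_le_card (A : Finset ℕ) (v : ℕ) : cc A v ≤ A.card :=
  card_le_card inter_subset_left

lemma cc_eq_card {A : Finset ℕ} {w v : ℕ} (hA : A ⊆ Icc 1 w) (h : w ≤ v) :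
    cc A v = A.card := by
  unfold cc
  rw [inter_eq_left.2 (hA.trans (Icc_subset_Icc le_rfl h))]

lemma cc_insert_of_le {A : Finset ℕ} {x v : ℕ} (h1 : 1 ≤ x) (hx : x ≤ v) (hxa : x ∉ A) :
    cc (insert x A) v = cc A v + 1 := by
  unfold cc
  rw [insert_inter_of_mem (by simp [mem_Icc, h1, hx]), card_insert_of_notMem (by simp [hxa])]

lemma cc_insert_of_gt {A : Finset ℕ} {x v : ℕ} (hx : v < x) :
    cc (insert x A) v = cc A v := by
  unfold cc
  rw [insert_inter_of_notMem (by simp [mem_Icc]; omega)]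

lemma cc_insert_le (A : Finset ℕ) (x v : ℕ) :
    cc (insert x A) v ≤ cc A v + 1 := by
  unfold cc
  refine (card_le_card ?_).trans (card_insert_le x _)
  intro y hy
  simp only [mem_inter, mem_insert] at hy ⊢
  tauto

lemma le_cc_insert (A : Finset ℕ) (x v : ℕ) : cc A v ≤ cc (insert x A) v :=
  card_le_card (inter_subset_inter (subset_insert _ _) Subset.rfl)

lemma cc_erase_of_le {A : Finset ℕ} {x v : ℕ} (h1 : 1 ≤ x) (hx : x ≤ v) (hxa : x ∈ A) :
    cc (A.erase x) v + 1 = cc A v := by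
  have h1' : x ∉ A.erase x := notMem_erase _ _
  have := cc_insert_of_le h1 hx h1'
  rw [insert_erase hxa] at this
  omega

lemma cc_erase_of_gt {A : Finset ℕ} {x v : ℕ} (hx : v < x) (hxa : x ∈ A) :
    cc (A.erase x) v = cc A v := by
  have := cc_insert_of_gt (A := A.erase x) hx
  rw [insert_erase hxa] at this
  omega

lemma cc_union_of_disjoint {A B : Finset ℕ} (h : Disjoint A B) (v : ℕ) :
    cc (A ∪ B) v = cc A v + cc B v := by
  unfold cc
  rw [union_inter_distrib_right]
  exact card_union_of_disjoint (disjoint_of_subset_left inter_subset_left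
    (disjoint_of_subset_right inter_subset_left h))

lemma cc_add_two (A : Finset ℕ) (v : ℕ) : cc A (v + 2) ≤ cc A v + 2 := by
  have hsub : A ∩ Icc 1 (v + 2) ⊆ (A ∩ Icc 1 v) ∪ {v + 1, v + 2} := by
    intro x hx
    simp only [mem_inter, mem_Icc, mem_union, mem_insert, mem_singleton] at hx ⊢
    obtain ⟨hxA, hx1, hx2⟩ := hx
    rcases Nat.lt_or_ge x (v+1) with h | h
    · exact Or.inl ⟨hxA, hx1, by omega⟩
    · right; omega
  calc cc A (v+2) ≤ ((A ∩ Icc 1 v) ∪ {v + 1, v + 2}).card := card_le_card hsub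
    _ ≤ (A ∩ Icc 1 v).card + ({v+1, v+2} : Finset ℕ).card := card_union_le _ _
    _ ≤ cc A v + 2 := by
        have : ({v+1, v+2} : Finset ℕ).card ≤ 2 := card_insert_le _ _ |>.trans (by simp)
        unfold cc; omega

lemma cc_subset {A B : Finset ℕ} (h : A ⊆ B) (v : ℕ) : cc A v ≤ cc B v :=
  card_le_card (inter_subset_inter h Subset.rfl)

/-- `𝒜` is stable under left-shifts within ground set `[1,n]`. -/
def IsShifted (n : ℕ) (𝒜 : Finset (Finset ℕ)) : Prop :=
  ∀ a b, 1 ≤ a → a < b → b ≤ n → ∀ A ∈ 𝒜, b ∈ A → a ∉ A → insert a (A.erase b) ∈ 𝒜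

lemma dominate_mem_aux {n : ℕ} {𝒜 : Finset (Finset ℕ)} (hsh : IsShifted n 𝒜) :
    ∀ m (A B : Finset ℕ), (A \ B).card ≤ m → A ∈ 𝒜 → A ⊆ Icc 1 n → B ⊆ Icc 1 n →
    B.card = A.card → (∀ v, cc A v ≤ cc B v) → B ∈ 𝒜 := by
  intro m
  induction m with
  | zero =>
    intro A B hm hA hAg hBg hcard hdom
    have h0 : A \ B = ∅ := card_eq_zero.1 (Nat.le_zero.1 hm)
    have hsub : A ⊆ B := by
      intro x hx
      by_contra hxB
      exact (notMem_empty x) (h0 ▸ mem_sdiff.2 ⟨hx, hxB⟩)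
    rwa [(eq_of_subset_of_card_le hsub (le_of_eq hcard)).symm]
  | succ m ih =>
    intro A B hm hA hAg hBg hcard hdom
    by_cases hAB : A \ B = ∅
    · have hsub : A ⊆ B := by
        intro x hx
        by_contra hxB
        exact (notMem_empty x) (hAB ▸ mem_sdiff.2 ⟨hx, hxB⟩)
      rwa [(eq_of_subset_of_card_le hsub (le_of_eq hcard)).symm]
    · have hABne : (A \ B).Nonempty := nonempty_of_ne_empty hAB
      have hBAne : (B \ A).Nonempty := by
        rw [← card_pos] at hABne ⊢
        have h1 : (A \ B).card + (A ∩ B).card = A.card := card_sdiff_add_card_inter A B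
        have h2 : (B \ A).card + (B ∩ A).card = B.card := card_sdiff_add_card_inter B A
        rw [inter_comm] at h2
        omega
      set a := (A \ B).min' hABne with ha
      set b := (B \ A).min' hBAne with hb
      have haA : a ∈ A ∧ a ∉ B := by have := (A \ B).min'_mem hABne; rwa [mem_sdiff] at this
      have hbB : b ∈ B ∧ b ∉ A := by have := (B \ A).min'_mem hBAne; rwa [mem_sdiff] at this
      have ha1 : 1 ≤ a ∧ a ≤ n := by have := hAg haA.1; rwa [mem_Icc] at this
      have hb1 : 1 ≤ b ∧ b ≤ n := by have := hBg hbB.1; rwa [mem_Icc] at this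
      -- b < a
      have hba : b < a := by
        by_contra hab
        push_neg at hab  -- a ≤ b
        have hane : a ≠ b := fun h => hbB.2 (h ▸ haA.1)
        have halt : a < b := lt_of_le_of_ne hab hane
        -- B ∩ [1,a] ⊆ (A ∩ [1,a]).erase a
        have hsub : B ∩ Icc 1 a ⊆ (A ∩ Icc 1 a).erase a := by
          intro x hx
          simp only [mem_inter, mem_Icc] at hx
          have hxA : x ∈ A := by
            by_contra hxA
            have : b ≤ x := (B \ A).min'_le x (mem_sdiff.2 ⟨hx.1, hxA⟩)
            omega
          have hxa : x ≠ a := fun h => haA.2 (h ▸ hx.1)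
          simp only [mem_erase, mem_inter, mem_Icc]
          exact ⟨hxa, hxA, hx.2⟩
        have h1 : cc B a ≤ cc A a - 1 := by
          have h2 : ((A ∩ Icc 1 a).erase a).card = cc A a - 1 := by
            rw [card_erase_of_mem (by simp [mem_inter, mem_Icc, haA.1, ha1.1])]; rfl
          exact h2 ▸ card_le_card hsub
        have h3 : 1 ≤ cc A a := by
          have : a ∈ A ∩ Icc 1 a := by simp [mem_inter, mem_Icc, haA.1, ha1.1]
          exact card_pos.2 ⟨a, this⟩
        have := hdom a
        unfold cc at *
        omega
      -- A' = insert b (A.erase a)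
      set A' := insert b (A.erase a) with hA'
      have hbnotin : b ∉ A.erase a := fun h => hbB.2 (mem_of_mem_erase h)
      have hA'mem : A' ∈ 𝒜 := hsh b a hb1.1 hba ha1.2 A hA haA.1 hbB.2
      have hA'g : A' ⊆ Icc 1 n := by
        intro x hx
        rcases mem_insert.1 hx with h | h
        · exact h ▸ (mem_Icc.2 ⟨hb1.1, hb1.2⟩)
        · exact hAg (mem_of_mem_erase h)
      have hA'card : A'.card = A.card := by
        rw [hA', card_insert_of_notMem hbnotin, card_erase_of_mem haA.1]
        have : 1 ≤ A.card := card_pos.2 ⟨a, haA.1⟩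
        omega
      have hA'B : A' \ B = (A \ B).erase a := by
        ext x
        simp only [hA', mem_sdiff, mem_erase, mem_insert, mem_sdiff]
        constructor
        · rintro ⟨h1 | h1, h2⟩
          · exact absurd (h1 ▸ hbB.1) h2
          · exact ⟨h1.1, h1.2, h2⟩
        · rintro ⟨h1, h2, h3⟩
          exact ⟨Or.inr ⟨h1, h2⟩, h3⟩
      have hA'Bcard : (A' \ B).card ≤ m := by
        rw [hA'B, card_erase_of_mem (mem_sdiff.2 ⟨haA.1, haA.2⟩)]
        omega
      refine ih A' B hA'Bcard hA'mem hA'g hBg (hcard.trans hA'card.symm) ?_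
      intro v
      rcases Nat.lt_or_ge v b with hv | hv
      · -- v < b < a : cc A' v = cc A v
        have h1 : cc A' v = cc A v := by
          rw [hA', cc_insert_of_gt hv, cc_erase_of_gt (by omega) haA.1]
        rw [h1]; exact hdom v
      rcases Nat.lt_or_ge v a with hv2 | hv2
      · -- b ≤ v < a : cc A' v = cc A v + 1 and cc B v ≥ cc A v + 1
        have h1 : cc A' v = cc A v + 1 := by
          rw [hA', cc_insert_of_le hb1.1 hv hbnotin, cc_erase_of_gt hv2 haA.1]
        rw [h1]
        -- insert b (A ∩ Icc 1 v) ⊆ B ∩ Icc 1 v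
        have hsub : insert b (A ∩ Icc 1 v) ⊆ B ∩ Icc 1 v := by
          intro x hx
          rcases mem_insert.1 hx with h | h
          · subst h; exact mem_inter.2 ⟨hbB.1, mem_Icc.2 ⟨hb1.1, hv⟩⟩
          · simp only [mem_inter, mem_Icc] at h ⊢
            have hxB : x ∈ B := by
              by_contra hxB
              have : a ≤ x := (A \ B).min'_le x (mem_sdiff.2 ⟨h.1, hxB⟩)
              omega
            exact ⟨hxB, h.2⟩
        have hbni : b ∉ A ∩ Icc 1 v := fun h => hbB.2 (mem_inter.1 h).1
        have := card_le_card hsub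
        rw [card_insert_of_notMem hbni] at this
        unfold cc at *
        omega
      · -- a ≤ v : cc A' v = cc A v
        have h1 : cc A' v = cc A v := by
          have e1 := cc_erase_of_le ha1.1 hv2 haA.1
          have e2 := cc_insert_of_le hb1.1 (le_trans (le_of_lt hba) hv2) hbnotin
          rw [hA']
          omega
        rw [h1]; exact hdom v

lemma dominate_mem {n : ℕ} {𝒜 : Finset (Finset ℕ)} (hsh : IsShifted n 𝒜)
    {A B : Finset ℕ} (hA : A ∈ 𝒜) (hAg : A ⊆ Icc 1 n) (hBg : B ⊆ Icc 1 n)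
    (hcard : B.card = A.card) (hdom : ∀ v, cc A v ≤ cc B v) : B ∈ 𝒜 :=
  dominate_mem_aux hsh (A \ B).card A B le_rfl hA hAg hBg hcard hdom

lemma subset_Icc_of_cc {X : Finset ℕ} {n v : ℕ} (hg : X ⊆ Icc 1 n)
    (h : X.card ≤ cc X v) : X ⊆ Icc 1 v := by
  have hsub : X ∩ Icc 1 v ⊆ X := inter_subset_left
  have heq := eq_of_subset_of_card_le hsub h
  intro x hx
  have hx2 : x ∈ X ∩ Icc 1 v := by rw [heq]; exact hx
  exact (mem_inter.1 hx2).2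

lemma greedy_aux (τ n : ℕ) : ∀ (c : ℕ) (A : Finset ℕ), A.card ≤ c → A ⊆ Icc 1 n →
    2 * A.card ≤ n + τ →
    (∃ i, τ + 2*i ≤ n ∧ τ + i ≤ cc A (τ + 2*i)) ∨
    (∃ B, B ⊆ Icc 1 n ∧ B.card = A.card ∧ (B ∩ A).card < τ ∧ ∀ v, cc A v ≤ cc B v) := by
  intro c
  induction c with
  | zero =>
    intro A hc _ _
    have hA : A = ∅ := card_eq_zero.1 (Nat.le_zero.1 hc)
    subst hA
    rcases Nat.eq_zero_or_pos τ with hτ | hτ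
    · left; exact ⟨0, by omega, by simp [hτ]⟩
    · right; exact ⟨∅, by simp, rfl, by simpa using hτ, fun v => le_rfl⟩
  | succ c ih =>
    intro A hc hg h2
    rcases A.eq_empty_or_nonempty with hA | hA
    · subst hA
      rcases Nat.eq_zero_or_pos τ with hτ | hτ
      · left; exact ⟨0, by omega, by simp [hτ]⟩
      · right; exact ⟨∅, by simp, rfl, by simpa using hτ, fun v => le_rfl⟩
    · set a := A.max' hA with haa
      have haA : a ∈ A := A.max'_mem hA
      have ha1 : 1 ≤ a ∧ a ≤ n := by have := hg haA; rwa [mem_Icc] at this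
      have hAsub : A ⊆ Icc 1 a := by
        intro x hx
        have := hg hx
        rw [mem_Icc] at this ⊢
        exact ⟨this.1, A.le_max' x hx⟩
      set A₀ := A.erase a with hA₀
      have hA₀sub : A₀ ⊆ Icc 1 n := (erase_subset _ _).trans hg
      have hA₀card : A₀.card + 1 = A.card := by
        rw [hA₀, card_erase_of_mem haA]
        have : 1 ≤ A.card := card_pos.2 ⟨a, haA⟩
        omega
      have hccA : ∀ v, v < a → cc A v = cc A₀ v := by
        intro v hv; rw [hA₀, cc_erase_of_gt hv haA]
      have hccA' : ∀ v, a ≤ v → cc A v = cc A₀ v + 1 := by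
        intro v hv
        rw [hA₀]
        have := cc_erase_of_le ha1.1 hv haA
        omega
      have hA₀sub' : A₀ ⊆ Icc 1 (a - 1) := by
        intro x hx
        have h1 := mem_Icc.1 (hAsub (mem_of_mem_erase hx))
        have h2 : x ≠ a := ne_of_mem_erase hx
        rw [mem_Icc]; omega
      rcases ih A₀ (by omega) hA₀sub (by omega) with ⟨i, hi1, hi2⟩ | ⟨B₀, hB₀g, hB₀c, hB₀i, hB₀d⟩
      · exact Or.inl ⟨i, hi1, hi2.trans (cc_subset (erase_subset _ _) _)⟩
      · -- B₀ ⊆ Icc 1 (a-1)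
        have hB₀lt : B₀ ⊆ Icc 1 (a - 1) := by
          refine subset_Icc_of_cc hB₀g ?_
          have h1 : cc A₀ (a-1) = A₀.card := cc_eq_card hA₀sub' le_rfl
          have := hB₀d (a-1)
          omega
        have haB₀ : a ∉ B₀ := by
          intro h
          have := mem_Icc.1 (hB₀lt h)
          omega
        set S := (Icc 1 a \ A) \ B₀ with hS
        rcases S.eq_empty_or_nonempty with hSe | hSne
        · -- Icc 1 a \ A ⊆ B₀
          have hsub : Icc 1 a \ A ⊆ B₀ := by
            intro x hx
            by_contra hxB
            exact (notMem_empty x) (hSe ▸ mem_sdiff.2 ⟨hx, hxB⟩)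
          rcases Nat.lt_or_ge ((B₀ ∩ A₀).card + 1) τ with hτc | hτc
          · -- B := insert a B₀
            right
            refine ⟨insert a B₀, ?_, ?_, ?_, ?_⟩
            · intro x hx
              rcases mem_insert.1 hx with h | h
              · exact h ▸ mem_Icc.2 ha1
              · exact hB₀g h
            · rw [card_insert_of_notMem haB₀]; omega
            · have : insert a B₀ ∩ A = insert a (B₀ ∩ A₀) := by
                ext x
                simp only [mem_inter, mem_insert, hA₀, mem_erase]
                constructor
                · rintro ⟨h1 | h1, h2⟩
                  · exact Or.inl h1
                  · right
                    refine ⟨h1, ?_, h2⟩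
                    intro hxa
                    exact haB₀ (hxa ▸ h1)
                · rintro (h1 | ⟨h1, h2, h3⟩)
                  · exact ⟨Or.inl h1, h1 ▸ haA⟩
                  · exact ⟨Or.inr h1, h3⟩
              rw [this, card_insert_of_notMem (fun h => haB₀ (mem_inter.1 h).1)]
              omega
            · intro v
              rcases Nat.lt_or_ge v a with hv | hv
              · rw [hccA v hv, cc_insert_of_gt hv]; exact hB₀d v
              · rw [hccA' v hv, cc_insert_of_le ha1.1 hv haB₀]
                exact Nat.add_le_add_right (hB₀d v) 1
          · -- fatal step: produce a valid index
            left
            set j := A.card with hj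
            have hjτ : τ ≤ j := by
              have : (B₀ ∩ A₀).card ≤ B₀.card := card_le_card inter_subset_left
              omega
            -- |Icc 1 a \ A| = a - j
            have hcA : cc A a = j := by rw [cc_eq_card hAsub le_rfl]
            have hIA : (Icc 1 a \ A).card + j = a := by
              have h1 : (Icc 1 a \ A).card + (Icc 1 a ∩ A).card = (Icc 1 a).card :=
                card_sdiff_add_card_inter _ _
              have h2 : (Icc 1 a ∩ A).card = cc A a := by rw [inter_comm]; rfl
              rw [Nat.card_Icc] at h1
              omega
            -- Icc 1 a \ A ⊆ B₀ \ A₀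
            have hsub2 : Icc 1 a \ A ⊆ B₀ \ A₀ := by
              intro x hx
              have h1 := mem_sdiff.1 hx
              exact mem_sdiff.2 ⟨hsub hx, fun h => h1.2 (mem_of_mem_erase h)⟩
            have hBA : (B₀ \ A₀).card + (B₀ ∩ A₀).card = B₀.card := card_sdiff_add_card_inter B₀ A₀
            have hle : a ≤ 2 * j - τ := by
              have := card_le_card hsub2
              omega
            refine ⟨j - τ, by omega, ?_⟩
            have h1 : cc A a ≤ cc A (τ + 2 * (j - τ)) := cc_mono A (by omega)
            omega
        · -- extend with d = min S
          right
          set d := S.min' hSne with hd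
          have hdS : d ∈ S := S.min'_mem hSne
          have hdfacts : (1 ≤ d ∧ d ≤ a) ∧ d ∉ A ∧ d ∉ B₀ := by
            have h1 := mem_sdiff.1 hdS
            have h2 := mem_sdiff.1 h1.1
            exact ⟨mem_Icc.1 h2.1, h2.2, h1.2⟩
          refine ⟨insert d B₀, ?_, ?_, ?_, ?_⟩
          · intro x hx
            rcases mem_insert.1 hx with h | h
            · subst h; rw [mem_Icc]; exact ⟨hdfacts.1.1, hdfacts.1.2.trans ha1.2⟩
            · exact hB₀g h
          · rw [card_insert_of_notMem hdfacts.2.2]; omega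
          · have : insert d B₀ ∩ A = B₀ ∩ A₀ := by
              ext x
              simp only [mem_inter, mem_insert, hA₀, mem_erase]
              constructor
              · rintro ⟨h1 | h1, h2⟩
                · exact absurd (h1 ▸ h2) hdfacts.2.1
                · refine ⟨h1, ?_, h2⟩
                  intro hxa
                  exact haB₀ (hxa ▸ h1)
              · rintro ⟨h1, _, h3⟩
                exact ⟨Or.inr h1, h3⟩
            rw [this]; omega
          · intro v
            rcases Nat.lt_or_ge v d with hv | hv
            · rw [cc_insert_of_gt hv]
              have hva : v < a := lt_of_lt_of_le hv hdfacts.1.2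
              rw [hccA v hva]; exact hB₀d v
            · rw [cc_insert_of_le hdfacts.1.1 hv hdfacts.2.2]
              have h1 : cc A v ≤ cc A₀ v + 1 := by
                rcases Nat.lt_or_ge v a with hva | hva
                · rw [hccA v hva]; omega
                · rw [hccA' v hva]
              exact h1.trans (Nat.add_le_add_right (hB₀d v) 1)

lemma cc_succ (A : Finset ℕ) (v : ℕ) : cc A (v + 1) ≤ cc A v + 1 := by
  have hsub : A ∩ Icc 1 (v + 1) ⊆ insert (v+1) (A ∩ Icc 1 v) := by
    intro x hx
    simp only [mem_inter, mem_Icc, mem_insert] at hx ⊢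
    obtain ⟨hxA, hx1, hx2⟩ := hx
    rcases Nat.lt_or_ge x (v+1) with h | h
    · exact Or.inr ⟨hxA, hx1, by omega⟩
    · left; omega
  calc cc A (v+1) ≤ (insert (v+1) (A ∩ Icc 1 v)).card := card_le_card hsub
    _ ≤ cc A v + 1 := card_insert_le _ _

lemma cc_zero (A : Finset ℕ) : cc A 0 = 0 := by
  simp [cc]

/-- at the minimal valid index, the count is exact. -/
lemma exact_count {n τ i : ℕ} {A : Finset ℕ} (hAg : A ⊆ Icc 1 n)
    (hP : τ + 2*i ≤ n ∧ τ + i ≤ cc A (τ + 2*i))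
    (hmin : ∀ j, j < i → ¬(τ + 2*j ≤ n ∧ τ + j ≤ cc A (τ + 2*j))) :
    cc A (τ + 2*i) = τ + i := by
  by_contra hne
  have hgt : τ + i + 1 ≤ cc A (τ + 2*i) := by
    rcases Nat.lt_or_ge (cc A (τ+2*i)) (τ+i+1) with h | h
    · omega
    · exact h
  rcases Nat.eq_zero_or_pos i with hi | hi
  · subst hi
    have := cc_le_self A (τ + 2*0)
    omega
  · obtain ⟨j, rfl⟩ : ∃ j, i = j + 1 := ⟨i - 1, by omega⟩
    refine hmin j (by omega) ⟨by omega, ?_⟩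
    have h1 : cc A (τ + 2*j + 1 + 1) ≤ cc A (τ + 2*j + 1) + 1 := cc_succ _ _
    have h2 : cc A (τ + 2*j + 1) ≤ cc A (τ + 2*j) + 1 := cc_succ _ _
    have h3 : τ + 2*(j+1) = τ + 2*j + 1 + 1 := by omega
    rw [h3] at hgt
    omega

lemma exists_dominating {n τ i : ℕ} {A : Finset ℕ} (hAg : A ⊆ Icc 1 n)
    (hP : τ + 2*i ≤ n ∧ τ + i ≤ cc A (τ + 2*i))
    (hmin : ∀ j, j < i → ¬(τ + 2*j ≤ n ∧ τ + j ≤ cc A (τ + 2*j))) :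
    ∃ C, C ⊆ Icc 1 n ∧ C.card = A.card ∧ (∀ v, cc A v ≤ cc C v) ∧
      (A \ Icc 1 (τ+2*i)) ∪ (Icc 1 (τ+2*i) \ A) ⊆ C := by
  have hexact : cc A (τ + 2*i) = τ + i := exact_count hAg hP hmin
  set D := Icc 1 (τ + 2*i) with hD
  -- minimal w with τ ≤ cc A w
  have hw0 : ∃ w, τ ≤ cc A w := ⟨τ + 2*i, by omega⟩
  obtain ⟨w, hwspec, hwmin⟩ : ∃ w, (τ ≤ cc A w) ∧ ∀ u, u < w → ¬ τ ≤ cc A u :=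
    ⟨Nat.find hw0, Nat.find_spec hw0, fun u hu => Nat.find_min hw0 hu⟩
  have hww : w ≤ τ + 2*i := by
    by_contra hcon
    push_neg at hcon
    exact hwmin _ hcon (by omega)
  have hwτ : cc A w = τ := by
    rcases Nat.eq_zero_or_pos w with h0 | h0
    · rw [h0] at hwspec ⊢
      have := cc_zero A
      omega
    · obtain ⟨w', rfl⟩ : ∃ w', w = w' + 1 := ⟨w - 1, by omega⟩
      have hmw : ¬ τ ≤ cc A w' := hwmin w' (by omega)
      have := cc_succ A w'
      omega
  set T := A ∩ Icc 1 w with hT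
  have hTcard : T.card = τ := hwτ
  have hTA : T ⊆ A := inter_subset_left
  have hTD : T ⊆ D := by
    refine inter_subset_right.trans (Icc_subset_Icc le_rfl hww)
  -- the candidate superset
  set C := ((A \ D) ∪ (D \ A)) ∪ T with hC
  have hd1 : Disjoint (A \ D) (D \ A) := by
    rw [disjoint_left]
    intro x h1 h2
    exact (mem_sdiff.1 h1).2 (mem_sdiff.1 h2).1
  have hd2 : Disjoint ((A \ D) ∪ (D \ A)) T := by
    rw [disjoint_left]
    intro x h1 h2
    rcases mem_union.1 h1 with h | h
    · exact (mem_sdiff.1 h).2 (hTD h2)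
    · exact (mem_sdiff.1 h).2 (hTA h2)
  -- cardinalities
  have hcAD : (A \ D).card + (τ + i) = A.card := by
    have h1 : (A \ D).card + (A ∩ D).card = A.card := card_sdiff_add_card_inter A D
    have h2 : (A ∩ D).card = cc A (τ + 2*i) := rfl
    omega
  have hcDA : (D \ A).card = i := by
    have h1 : (D \ A).card + (D ∩ A).card = D.card := card_sdiff_add_card_inter D A
    have h2 : (D ∩ A).card = cc A (τ + 2*i) := by rw [inter_comm]; rfl
    have h3 : D.card = τ + 2*i := by rw [hD, Nat.card_Icc]; omega
    omega
  have hCcard : C.card = A.card := by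
    rw [hC, card_union_of_disjoint hd2, card_union_of_disjoint hd1]
    have := cc_le_card A (τ + 2*i)
    omega
  have hCg : C ⊆ Icc 1 n := by
    intro x hx
    rcases mem_union.1 hx with h | h
    · rcases mem_union.1 h with h' | h'
      · exact hAg (mem_sdiff.1 h').1
      · exact (Icc_subset_Icc le_rfl hP.1) (mem_sdiff.1 h').1
    · exact hAg (hTA h)
  refine ⟨C, hCg, hCcard, ?_, subset_union_left⟩
  -- domination
  intro v
  have hccC : cc C v = cc (A \ D) v + cc (D \ A) v + cc T v := by
    rw [hC, cc_union_of_disjoint hd2, cc_union_of_disjoint hd1]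
  rcases Nat.lt_or_ge v (τ + 2*i) with hv | hv
  · -- v < τ + 2i
    set q := cc A v with hq
    have hqle : q ≤ τ + i := by
      have := cc_mono A (le_of_lt hv)
      omega
    have hDAv : cc (D \ A) v + q = v := by
      have h1 : (D \ A) ∩ Icc 1 v = Icc 1 v \ A := by
        ext x
        simp only [mem_inter, mem_sdiff, mem_Icc, hD]
        constructor
        · rintro ⟨⟨h1, h2⟩, h3⟩; exact ⟨h3, h2⟩
        · rintro ⟨h1, h2⟩
          exact ⟨⟨⟨h1.1, by omega⟩, h2⟩, h1⟩
      have h2 : (Icc 1 v \ A).card + (Icc 1 v ∩ A).card = (Icc 1 v).card :=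
        card_sdiff_add_card_inter _ _
      have h3 : (Icc 1 v ∩ A).card = q := by rw [inter_comm]; rfl
      have h4 : (Icc 1 v).card = v := by rw [Nat.card_Icc]; omega
      unfold cc
      rw [h1]
      omega
    have hqv : q ≤ v := cc_le_self A v
    rcases Nat.lt_or_ge v (w+1) with hvw | hvw
    · -- v ≤ w : cc T v = q, and q ≤ τ
      have hTv : cc T v = q := by
        have : T ∩ Icc 1 v = A ∩ Icc 1 v := by
          ext x
          simp only [hT, mem_inter, mem_Icc]
          constructor
          · rintro ⟨⟨h1, h2⟩, h3⟩; exact ⟨h1, h3⟩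
          · rintro ⟨h1, h2⟩
            exact ⟨⟨h1, h2.1, by omega⟩, h2⟩
        unfold cc
        rw [this]
        exact hq.symm
      omega
    · -- w < v : cc T v = τ
      have hTv : cc T v = τ := by
        rw [cc_eq_card (inter_subset_right) (by omega), hTcard]
      rcases Nat.lt_or_ge τ q with hqτ | hqτ
      · -- q > τ: show v ≥ 2q - τ
        have hvq : 2*q ≤ v + τ := by
          by_contra hcon
          push_neg at hcon
          set j := q - τ - 1 with hj
          have hji : j < i := by omega
          refine hmin j hji ⟨by omega, ?_⟩
          rcases Nat.lt_or_ge (τ + 2*j) v with h | h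
          · -- v = τ + 2j + 1
            have hveq : v = τ + 2*j + 1 := by omega
            have := cc_succ A (τ + 2*j)
            rw [← hveq] at this
            omega
          · have := cc_mono A h
            omega
        omega
      · omega
  · -- τ + 2i ≤ v
    have hTv : cc T v = τ := by
      rw [cc_eq_card (inter_subset_right) (by omega), hTcard]
    have hDAv : cc (D \ A) v = i := by
      rw [cc_eq_card (sdiff_subset.trans (by rw [hD])) hv, hcDA]
    have hADv : cc (A \ D) v + (τ + i) = cc A v := by
      have h1 : ((A \ D) ∩ Icc 1 v) ∪ (A ∩ D) = A ∩ Icc 1 v := by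
        ext x
        simp only [mem_union, mem_inter, mem_sdiff, hD, mem_Icc]
        constructor
        · rintro (⟨⟨h1, h2⟩, h3⟩ | ⟨h1, h2, h3⟩)
          · exact ⟨h1, h3⟩
          · exact ⟨h1, by omega⟩
        · rintro ⟨h1, h2, h3⟩
          rcases Nat.lt_or_ge (τ + 2*i) x with h | h
          · exact Or.inl ⟨⟨h1, fun hc => by omega⟩, h2, h3⟩
          · exact Or.inr ⟨h1, h2, h⟩
      have h2 : Disjoint ((A \ D) ∩ Icc 1 v) (A ∩ D) := by
        rw [disjoint_left]
        intro x hx1 hx2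
        exact (mem_sdiff.1 (mem_inter.1 hx1).1).2 (mem_inter.1 hx2).2
      have h3 := card_union_of_disjoint h2
      rw [h1] at h3
      have h4 : (A ∩ D).card = τ + i := hexact
      unfold cc
      omega
    omega

lemma card_move {A : Finset ℕ} {d s : ℕ} (hs : cc A d = s) :
    ((A \ Icc 1 d) ∪ (Icc 1 d \ A)).card + s + s = A.card + d := by
  have hd1 : Disjoint (A \ Icc 1 d) (Icc 1 d \ A) := by
    rw [disjoint_left]
    intro x h1 h2
    exact (mem_sdiff.1 h1).2 (mem_sdiff.1 h2).1
  rw [card_union_of_disjoint hd1]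
  have h1 : (A \ Icc 1 d).card + (A ∩ Icc 1 d).card = A.card := card_sdiff_add_card_inter _ _
  have h2 : (Icc 1 d \ A).card + (Icc 1 d ∩ A).card = (Icc 1 d).card :=
    card_sdiff_add_card_inter _ _
  have h3 : (Icc 1 d ∩ A).card = s := by rw [inter_comm]; exact hs
  have h4 : (A ∩ Icc 1 d).card = s := hs
  have h5 : (Icc 1 d).card = d := by rw [Nat.card_Icc]; omega
  omega

lemma move_inter {A : Finset ℕ} {d d' : ℕ} (h : d ≤ d') :
    ((A \ Icc 1 d') ∪ (Icc 1 d' \ A)) ∩ Icc 1 d = Icc 1 d \ A := by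
  ext x
  simp only [mem_inter, mem_union, mem_sdiff, mem_Icc]
  constructor
  · rintro ⟨h1 | h1, h2⟩
    · exact absurd ⟨h2.1, by omega⟩ h1.2
    · exact ⟨h2, h1.2⟩
  · rintro ⟨h1, h2⟩
    exact ⟨Or.inr ⟨⟨h1.1, by omega⟩, h2⟩, h1⟩

lemma move_recover {A : Finset ℕ} {d : ℕ} :
    (((A \ Icc 1 d) ∪ (Icc 1 d \ A)) \ Icc 1 d) ∪
      (Icc 1 d \ ((A \ Icc 1 d) ∪ (Icc 1 d \ A))) = A ∪ (A \ Icc 1 d) := by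
  ext x
  simp only [mem_union, mem_sdiff, mem_Icc]
  by_cases hxA : x ∈ A <;> by_cases hxd : 1 ≤ x ∧ x ≤ d <;> tauto

lemma katona_core {n m τ : ℕ} {𝒜 : Finset (Finset ℕ)}
    (h𝒜 : 𝒜 ⊆ powersetCard m (Icc 1 n)) (hsh : IsShifted n 𝒜)
    (hint : ∀ A ∈ 𝒜, ∀ A' ∈ 𝒜, τ ≤ (A ∩ A').card)
    (h2m : 2 * m ≤ n + τ) :
    𝒜.card ≤ ((powersetCard (m - τ) (Icc 1 n)).filter (fun B => ∃ C ∈ 𝒜, B ⊆ C)).card := by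
  classical
  have hmem : ∀ A ∈ 𝒜, A ⊆ Icc 1 n ∧ A.card = m := by
    intro A hA
    have := h𝒜 hA
    rwa [mem_powersetCard] at this
  have hex : ∀ A ∈ 𝒜, ∃ i, τ + 2*i ≤ n ∧ τ + i ≤ cc A (τ + 2*i) := by
    intro A hA
    obtain ⟨hAg, hAc⟩ := hmem A hA
    rcases greedy_aux τ n A.card A le_rfl hAg (by omega) with h | ⟨B, hBg, hBc, hBi, hBd⟩
    · exact h
    · exfalso
      have hB𝒜 : B ∈ 𝒜 := dominate_mem hsh hA hAg hBg hBc hBd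
      have := hint A hA B hB𝒜
      rw [inter_comm] at this
      omega
  set g : Finset ℕ → Finset ℕ := fun A =>
    if h : ∃ i, τ + 2*i ≤ n ∧ τ + i ≤ cc A (τ + 2*i) then
      (A \ Icc 1 (τ + 2*Nat.find h)) ∪ (Icc 1 (τ + 2*Nat.find h) \ A) else ∅
    with hgdef
  have key : ∀ A ∈ 𝒜, ∃ i, g A = (A \ Icc 1 (τ+2*i)) ∪ (Icc 1 (τ+2*i) \ A)
      ∧ (τ+2*i ≤ n ∧ τ + i ≤ cc A (τ+2*i))
      ∧ (∀ j, j < i → ¬(τ+2*j ≤ n ∧ τ+j ≤ cc A (τ+2*j))) := by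
    intro A hA
    refine ⟨Nat.find (hex A hA), ?_, Nat.find_spec (hex A hA),
      fun j hj => Nat.find_min (hex A hA) hj⟩
    simp only [hgdef, dif_pos (hex A hA)]
  refine card_le_card_of_injOn g ?_ ?_
  · -- maps into target
    intro A hA
    obtain ⟨hAg, hAc⟩ := hmem A hA
    obtain ⟨i, hgA, hP, hmin⟩ := key A hA
    rw [mem_coe, mem_filter, mem_powersetCard]
    have hexi := exact_count hAg hP hmin
    have hcard := card_move hexi
    have hsub : g A ⊆ Icc 1 n := by
      rw [hgA]
      intro x hx
      rcases mem_union.1 hx with h | h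
      · exact hAg (mem_sdiff.1 h).1
      · exact (Icc_subset_Icc le_rfl hP.1) (mem_sdiff.1 h).1
    have hccle : τ + i ≤ m := by
      have := cc_le_card A (τ + 2*i)
      omega
    refine ⟨⟨hsub, by rw [hgA]; omega⟩, ?_⟩
    obtain ⟨C, hCg, hCc, hCd, hCsup⟩ := exists_dominating hAg hP hmin
    exact ⟨C, dominate_mem hsh hA hAg hCg hCc hCd, by rw [hgA]; exact hCsup⟩
  · -- injective
    intro A hA A' hA' heq
    obtain ⟨hAg, hAc⟩ := hmem A hA
    obtain ⟨hAg', hAc'⟩ := hmem A' hA'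
    obtain ⟨i, hgA, hP, hmin⟩ := key A hA
    obtain ⟨i', hgA', hP', hmin'⟩ := key A' hA'
    have hexi := exact_count hAg hP hmin
    have hexi' := exact_count hAg' hP' hmin'
    -- first, i = i'
    have hii : i = i' := by
      by_contra hne
      rcases Nat.lt_or_ge i i' with hlt | hge
      · -- i < i' : contradiction with minimality for A'
        refine hmin' i hlt ⟨hP.1, ?_⟩
        have e1 : g A ∩ Icc 1 (τ+2*i) = Icc 1 (τ+2*i) \ A := by
          rw [hgA]; exact move_inter le_rfl
        have e2 : g A ∩ Icc 1 (τ+2*i) = Icc 1 (τ+2*i) \ A' := by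
          rw [heq, hgA']; exact move_inter (by omega)
        have e3 : Icc 1 (τ+2*i) \ A = Icc 1 (τ+2*i) \ A' := e1 ▸ e2
        have e4 : cc A' (τ+2*i) = cc A (τ+2*i) := by
          unfold cc
          have f1 : (Icc 1 (τ+2*i) \ A).card + (Icc 1 (τ+2*i) ∩ A).card
              = (Icc 1 (τ+2*i)).card := card_sdiff_add_card_inter _ _
          have f2 : (Icc 1 (τ+2*i) \ A').card + (Icc 1 (τ+2*i) ∩ A').card
              = (Icc 1 (τ+2*i)).card := card_sdiff_add_card_inter _ _
          rw [e3] at f1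
          rw [inter_comm A (Icc 1 (τ+2*i)), inter_comm A' (Icc 1 (τ+2*i))]
          omega
        rw [e4, hexi]
      · have hlt : i' < i := by omega
        refine hmin i' hlt ⟨hP'.1, ?_⟩
        have e1 : g A' ∩ Icc 1 (τ+2*i') = Icc 1 (τ+2*i') \ A' := by
          rw [hgA']; exact move_inter le_rfl
        have e2 : g A' ∩ Icc 1 (τ+2*i') = Icc 1 (τ+2*i') \ A := by
          rw [← heq, hgA]; exact move_inter (by omega)
        have e3 : Icc 1 (τ+2*i') \ A' = Icc 1 (τ+2*i') \ A := e1 ▸ e2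
        have e4 : cc A (τ+2*i') = cc A' (τ+2*i') := by
          unfold cc
          have f1 : (Icc 1 (τ+2*i') \ A).card + (Icc 1 (τ+2*i') ∩ A).card
              = (Icc 1 (τ+2*i')).card := card_sdiff_add_card_inter _ _
          have f2 : (Icc 1 (τ+2*i') \ A').card + (Icc 1 (τ+2*i') ∩ A').card
              = (Icc 1 (τ+2*i')).card := card_sdiff_add_card_inter _ _
          rw [e3] at f2
          rw [inter_comm A (Icc 1 (τ+2*i')), inter_comm A' (Icc 1 (τ+2*i'))]
          omega
        rw [e4, hexi']
    -- now recover A and A'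
    subst hii
    have r1 : (g A \ Icc 1 (τ+2*i)) ∪ (Icc 1 (τ+2*i) \ g A) = A ∪ (A \ Icc 1 (τ+2*i)) := by
      rw [hgA]; exact move_recover
    have r2 : (g A \ Icc 1 (τ+2*i)) ∪ (Icc 1 (τ+2*i) \ g A) = A' ∪ (A' \ Icc 1 (τ+2*i)) := by
      rw [heq, hgA']; exact move_recover
    have r3 : A ∪ (A \ Icc 1 (τ+2*i)) = A := by
      apply union_eq_left.2
      exact sdiff_subset
    have r4 : A' ∪ (A' \ Icc 1 (τ+2*i)) = A' := by
      apply union_eq_left.2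
      exact sdiff_subset
    rw [r3] at r1
    rw [r4] at r2
    rw [← r1, ← r2]

/-- replace `a` by `b` if possible -/
def up (a b : ℕ) (F : Finset ℕ) : Finset ℕ :=
  if a ∈ F ∧ b ∉ F then insert b (F.erase a) else F

def upFam (a b : ℕ) (ℱ : Finset (Finset ℕ)) : Finset (Finset ℕ) :=
  ℱ.filter (fun F => up a b F ∈ ℱ) ∪ (ℱ.filter (fun F => up a b F ∉ ℱ)).image (up a b)

variable {a b : ℕ} {ℱ : Finset (Finset ℕ)} {F X Y : Finset ℕ}

lemma up_eq_of_moved (h : a ∈ F ∧ b ∉ F) : up a b F = insert b (F.erase a) := if_pos h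

lemma up_eq_of_unmoved (h : ¬(a ∈ F ∧ b ∉ F)) : up a b F = F := if_neg h

lemma up_card (hab : a ≠ b) : (up a b F).card = F.card := by
  unfold up
  split_ifs with h
  · rw [card_insert_of_notMem (fun hc => h.2 (mem_of_mem_erase hc)),
      card_erase_of_mem h.1]
    have : 1 ≤ F.card := card_pos.2 ⟨a, h.1⟩
    omega
  · rfl

lemma up_mem_iff {x : ℕ} (hab : a ≠ b) (h : a ∈ F ∧ b ∉ F) :
    x ∈ up a b F ↔ (x ∈ F ∧ x ≠ a) ∨ x = b := by
  rw [up_eq_of_moved h, mem_insert, mem_erase]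
  tauto

lemma mem_upFam : X ∈ upFam a b ℱ ↔
    (X ∈ ℱ ∧ up a b X ∈ ℱ) ∨ (∃ F, F ∈ ℱ ∧ up a b F ∉ ℱ ∧ X = up a b F) := by
  unfold upFam
  rw [mem_union, mem_filter, mem_image]
  constructor
  · rintro (h | ⟨F, hF, rfl⟩)
    · exact Or.inl h
    · rw [mem_filter] at hF
      exact Or.inr ⟨F, hF.1, hF.2, rfl⟩
  · rintro (h | ⟨F, h1, h2, rfl⟩)
    · exact Or.inl h
    · exact Or.inr ⟨F, mem_filter.2 ⟨h1, h2⟩, rfl⟩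

lemma card_upFam (hab : a ≠ b) : (upFam a b ℱ).card = ℱ.card := by
  unfold upFam
  rw [card_union_of_disjoint, card_image_of_injOn]
  · rw [← card_union_of_disjoint (disjoint_filter_filter_not ℱ ℱ _),
      filter_union_filter_not_eq]
  · -- injective on moved part
    intro X hX Y hY hXY
    rw [coe_filter] at hX hY
    obtain ⟨hXF, hXm⟩ := hX
    obtain ⟨hYF, hYm⟩ := hY
    have hXmv : a ∈ X ∧ b ∉ X := by
      by_contra h
      rw [up_eq_of_unmoved h] at hXm
      exact hXm hXF
    have hYmv : a ∈ Y ∧ b ∉ Y := by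
      by_contra h
      rw [up_eq_of_unmoved h] at hYm
      exact hYm hYF
    have recov : ∀ Z : Finset ℕ, (a ∈ Z ∧ b ∉ Z) → insert a ((up a b Z).erase b) = Z := by
      intro Z hZ
      rw [up_eq_of_moved hZ, erase_insert (fun hc => hZ.2 (mem_of_mem_erase hc)),
        insert_erase hZ.1]
    calc X = insert a ((up a b X).erase b) := (recov X hXmv).symm
      _ = insert a ((up a b Y).erase b) := by rw [hXY]
      _ = Y := recov Y hYmv
  · -- disjoint
    rw [disjoint_left]
    intro X hX hX2
    rw [mem_filter] at hX
    obtain ⟨Y, hY, rfl⟩ := mem_image.1 hX2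
    rw [mem_filter] at hY
    exact hY.2 hX.1

lemma upFam_ground {n r : ℕ} (h1a : 1 ≤ a) (hab : a < b) (hbn : b ≤ n)
    (hℱ : ℱ ⊆ powersetCard r (Icc 1 n)) :
    upFam a b ℱ ⊆ powersetCard r (Icc 1 n) := by
  intro X hX
  rcases mem_upFam.1 hX with h | ⟨F, hF, _, rfl⟩
  · exact hℱ h.1
  · have hFp := mem_powersetCard.1 (hℱ hF)
    rw [mem_powersetCard]
    constructor
    · intro x hx
      unfold up at hx
      split_ifs at hx with h
      · rcases mem_insert.1 hx with rfl | hx'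
        · rw [mem_Icc]; omega
        · exact hFp.1 (mem_of_mem_erase hx')
      · exact hFp.1 hx
    · rw [up_card (Nat.ne_of_lt hab)]; exact hFp.2

/-- intersection with a moved set, when the partner keeps its shifted version in the family -/
lemma up_inter_ge {t : ℕ} (hab : a ≠ b)
    (hint : ∀ P ∈ ℱ, ∀ Q ∈ ℱ, t ≤ (P ∩ Q).card)
    (hF : F ∈ ℱ) (hFmv : a ∈ F ∧ b ∉ F)
    (hY : Y ∈ ℱ) (hYk : up a b Y ∈ ℱ) :
    t ≤ (up a b F ∩ Y).card := by
  by_cases hYmv : a ∈ Y ∧ b ∉ Y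
  · -- Y is movable: compare with up Y
    have key : up a b F ∩ Y = F ∩ up a b Y := by
      ext x
      rw [mem_inter, mem_inter, up_mem_iff hab hFmv, up_mem_iff hab hYmv]
      constructor
      · rintro ⟨h1 | h1, h2⟩
        · refine ⟨h1.1, Or.inl ⟨h2, h1.2⟩⟩
        · exact absurd (h1 ▸ h2) hYmv.2
      · rintro ⟨h1, h2 | h2⟩
        · exact ⟨Or.inl ⟨h1, h2.2⟩, h2.1⟩
        · exact absurd (h2 ▸ h1) hFmv.2
    rw [key]
    exact hint F hF _ hYk
  · -- Y not movable: a ∉ Y ∨ b ∈ Y ; direct comparison with F ∩ Y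
    rcases Classical.em (a ∈ Y) with haY | haY
    · -- then b ∈ Y (since not movable), so b ∈ up F ∩ Y \ (F ∩ Y), a ∈ (F∩Y) \ upF∩Y
      have hbY : b ∈ Y := by tauto
      have key2 : insert b ((F ∩ Y).erase a) ⊆ up a b F ∩ Y := by
        intro x hx
        rcases mem_insert.1 hx with rfl | hx'
        · rw [mem_inter, up_mem_iff hab hFmv]
          exact ⟨Or.inr rfl, hbY⟩
        · rw [mem_erase, mem_inter] at hx'
          rw [mem_inter, up_mem_iff hab hFmv]
          exact ⟨Or.inl ⟨hx'.2.1, hx'.1⟩, hx'.2.2⟩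
      have h1 : t ≤ (F ∩ Y).card := hint F hF Y hY
      have h2 : (insert b ((F ∩ Y).erase a)).card = (F ∩ Y).card := by
        rw [card_insert_of_notMem (fun hc => hFmv.2 (mem_inter.1 (mem_of_mem_erase hc)).1),
          card_erase_of_mem (mem_inter.2 ⟨hFmv.1, haY⟩)]
        have : 1 ≤ (F ∩ Y).card := card_pos.2 ⟨a, mem_inter.2 ⟨hFmv.1, haY⟩⟩
        omega
      have := card_le_card key2
      omega
    · -- a ∉ Y : F ∩ Y ⊆ up F ∩ Y
      have key2 : F ∩ Y ⊆ up a b F ∩ Y := by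
        intro x hx
        rw [mem_inter] at hx
        have hxa : x ≠ a := fun hc => haY (hc ▸ hx.2)
        rw [mem_inter, up_mem_iff hab hFmv]
        exact ⟨Or.inl ⟨hx.1, hxa⟩, hx.2⟩
      exact (hint F hF Y hY).trans (card_le_card key2)

lemma upFam_intersecting {t : ℕ} (hab : a ≠ b)
    (hint : ∀ P ∈ ℱ, ∀ Q ∈ ℱ, t ≤ (P ∩ Q).card) :
    ∀ P ∈ upFam a b ℱ, ∀ Q ∈ upFam a b ℱ, t ≤ (P ∩ Q).card := by
  intro P hP Q hQ
  rcases mem_upFam.1 hP with hP' | ⟨F, hF, hFm, rfl⟩ <;>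
    rcases mem_upFam.1 hQ with hQ' | ⟨G, hG, hGm, rfl⟩
  · exact hint P hP'.1 Q hQ'.1
  · have hGmv : a ∈ G ∧ b ∉ G := by
      by_contra h
      rw [up_eq_of_unmoved h] at hGm
      exact hGm hG
    rw [inter_comm]
    exact up_inter_ge hab hint hG hGmv hP'.1 hP'.2
  · have hFmv : a ∈ F ∧ b ∉ F := by
      by_contra h
      rw [up_eq_of_unmoved h] at hFm
      exact hFm hF
    exact up_inter_ge hab hint hF hFmv hQ'.1 hQ'.2
  · have hFmv : a ∈ F ∧ b ∉ F := by
      by_contra h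
      rw [up_eq_of_unmoved h] at hFm
      exact hFm hF
    have hGmv : a ∈ G ∧ b ∉ G := by
      by_contra h
      rw [up_eq_of_unmoved h] at hGm
      exact hGm hG
    have key : up a b F ∩ up a b G = insert b ((F ∩ G).erase a) := by
      ext x
      rw [mem_inter, up_mem_iff hab hFmv, up_mem_iff hab hGmv, mem_insert, mem_erase, mem_inter]
      constructor
      · rintro ⟨h1 | h1, h2 | h2⟩
        · exact Or.inr ⟨h1.2, h1.1, h2.1⟩
        · exact Or.inl h2
        · exact Or.inl h1
        · exact Or.inl h1
      · rintro (rfl | ⟨h1, h2, h3⟩)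
        · exact ⟨Or.inr rfl, Or.inr rfl⟩
        · exact ⟨Or.inl ⟨h2, h1⟩, Or.inl ⟨h3, h1⟩⟩
    rw [key, card_insert_of_notMem (fun hc => hFmv.2 (mem_inter.1 (mem_of_mem_erase hc)).1),
      card_erase_of_mem (mem_inter.2 ⟨hFmv.1, hGmv.1⟩)]
    have h1 : 1 ≤ (F ∩ G).card := card_pos.2 ⟨a, mem_inter.2 ⟨hFmv.1, hGmv.1⟩⟩
    have := hint F hF G hG
    omega

/-- termination measure -/
def wsum (n : ℕ) (ℱ : Finset (Finset ℕ)) : ℕ := ∑ F ∈ ℱ, ∑ x ∈ F, (n + 1 - x)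

lemma wsum_upFam_lt {n : ℕ} (hab : a < b) (hbn : b ≤ n)
    (hmv : ∃ F ∈ ℱ, up a b F ∉ ℱ) :
    wsum n (upFam a b ℱ) < wsum n ℱ := by
  classical
  unfold upFam wsum
  have habne : a ≠ b := Nat.ne_of_lt hab
  rw [sum_union, sum_image]
  · have hsplit : ∑ F ∈ ℱ, ∑ x ∈ F, (n + 1 - x) =
        (∑ F ∈ ℱ.filter (fun F => up a b F ∈ ℱ), ∑ x ∈ F, (n + 1 - x)) +
        (∑ F ∈ ℱ.filter (fun F => up a b F ∉ ℱ), ∑ x ∈ F, (n + 1 - x)) :=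
      (sum_filter_add_sum_filter_not ℱ _ _).symm
    rw [hsplit]
    have hlt : ∑ F ∈ ℱ.filter (fun F => up a b F ∉ ℱ), ∑ x ∈ up a b F, (n + 1 - x) <
        ∑ F ∈ ℱ.filter (fun F => up a b F ∉ ℱ), ∑ x ∈ F, (n + 1 - x) := by
      obtain ⟨F₀, hF₀, hF₀m⟩ := hmv
      refine sum_lt_sum (fun F hF => ?_) ⟨F₀, mem_filter.2 ⟨hF₀, hF₀m⟩, ?_⟩
      · -- ≤ for all
        rw [mem_filter] at hF
        have hFmv : a ∈ F ∧ b ∉ F := by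
          by_contra h
          rw [up_eq_of_unmoved h] at hF
          exact hF.2 hF.1
        rw [up_eq_of_moved hFmv,
          sum_insert (fun hc => hFmv.2 (mem_of_mem_erase hc)),
          ← sum_erase_add F _ hFmv.1]
        have : n + 1 - b ≤ n + 1 - a := by omega
        omega
      · -- strict for F₀
        have hFmv : a ∈ F₀ ∧ b ∉ F₀ := by
          by_contra h
          rw [up_eq_of_unmoved h] at hF₀m
          exact hF₀m hF₀
        rw [up_eq_of_moved hFmv,
          sum_insert (fun hc => hFmv.2 (mem_of_mem_erase hc)),
          ← sum_erase_add F₀ _ hFmv.1]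
        have : n + 1 - b < n + 1 - a := by omega
        omega
    omega
  · -- injectivity for sum_image
    intro X hX Y hY hXY
    rw [mem_coe, mem_filter] at hX hY
    have hXmv : a ∈ X ∧ b ∉ X := by
      by_contra h
      rw [up_eq_of_unmoved h] at hX
      exact hX.2 hX.1
    have hYmv : a ∈ Y ∧ b ∉ Y := by
      by_contra h
      rw [up_eq_of_unmoved h] at hY
      exact hY.2 hY.1
    have recov : ∀ Z : Finset ℕ, (a ∈ Z ∧ b ∉ Z) → insert a ((up a b Z).erase b) = Z := by
      intro Z hZ
      rw [up_eq_of_moved hZ, erase_insert (fun hc => hZ.2 (mem_of_mem_erase hc)),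
        insert_erase hZ.1]
    calc X = insert a ((up a b X).erase b) := (recov X hXmv).symm
      _ = insert a ((up a b Y).erase b) := by rw [hXY]
      _ = Y := recov Y hYmv
  · rw [disjoint_left]
    intro X hX hX2
    rw [mem_filter] at hX
    obtain ⟨Y, hY, rfl⟩ := mem_image.1 hX2
    rw [mem_filter] at hY
    exact hY.2 hX.1

/-- the family of `k`-subsets of the ground set disjoint from some member of `ℱ` -/
def nbhd (n k : ℕ) (ℱ : Finset (Finset ℕ)) : Finset (Finset ℕ) :=
  (powersetCard k (Icc 1 n)).filter (fun B => ∃ F ∈ ℱ, F ∩ B = ∅)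

lemma disj_of_inter_empty {F B : Finset ℕ} (h : F ∩ B = ∅) {x : ℕ} (hx : x ∈ F) : x ∉ B :=
  fun hxB => notMem_empty x (h ▸ mem_inter.2 ⟨hx, hxB⟩)

lemma nbhd_upFam_le {n k : ℕ} (h1a : 1 ≤ a) (hab : a < b) (hbn : b ≤ n) :
    (nbhd n k (upFam a b ℱ)).card ≤ (nbhd n k ℱ).card := by
  classical
  have habne : a ≠ b := Nat.ne_of_lt hab
  -- structure of elements of nbhd(ℱ') not in nbhd(ℱ)
  have hstruct : ∀ B ∈ nbhd n k (upFam a b ℱ), B ∉ nbhd n k ℱ →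
      a ∈ B ∧ b ∉ B ∧ insert b (B.erase a) ∈ nbhd n k ℱ := by
    intro B hB hBn
    obtain ⟨hBp, F₁, hF₁, hF₁B⟩ := mem_filter.1 hB
    rcases mem_upFam.1 hF₁ with hk | ⟨F, hF, hFm, rfl⟩
    · exact absurd (mem_filter.2 ⟨hBp, F₁, hk.1, hF₁B⟩) hBn
    · have hFmv : a ∈ F ∧ b ∉ F := by
        by_contra h
        rw [up_eq_of_unmoved h] at hFm
        exact hFm hF
      have hbB : b ∉ B := disj_of_inter_empty hF₁B ((up_mem_iff habne hFmv).2 (Or.inr rfl))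
      have haB : a ∈ B := by
        by_contra haB
        refine hBn (mem_filter.2 ⟨hBp, F, hF, ?_⟩)
        rw [eq_empty_iff_forall_notMem]
        intro x hx
        rw [mem_inter] at hx
        have hxa : x ≠ a := fun hc => haB (hc ▸ hx.2)
        exact disj_of_inter_empty hF₁B ((up_mem_iff habne hFmv).2 (Or.inl ⟨hx.1, hxa⟩)) hx.2
      refine ⟨haB, hbB, ?_⟩
      obtain ⟨hBg, hBc⟩ := mem_powersetCard.1 hBp
      refine mem_filter.2 ⟨mem_powersetCard.2 ⟨?_, ?_⟩, F, hF, ?_⟩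
      · intro x hx
        rcases mem_insert.1 hx with rfl | hx'
        · rw [mem_Icc]; omega
        · exact hBg (mem_of_mem_erase hx')
      · rw [card_insert_of_notMem (fun hc => hbB (mem_of_mem_erase hc)),
          card_erase_of_mem haB]
        have : 1 ≤ B.card := card_pos.2 ⟨a, haB⟩
        omega
      · rw [eq_empty_iff_forall_notMem]
        intro x hx
        rw [mem_inter] at hx
        rcases mem_insert.1 hx.2 with rfl | hx'
        · exact hFmv.2 hx.1
        · rw [mem_erase] at hx'
          exact disj_of_inter_empty hF₁B
            ((up_mem_iff habne hFmv).2 (Or.inl ⟨hx.1, hx'.1⟩)) hx'.2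
  refine card_le_card_of_injOn
    (fun B => if B ∈ nbhd n k ℱ then B else insert b (B.erase a)) ?_ ?_
  · intro B hB
    dsimp only
    by_cases hBF : B ∈ nbhd n k ℱ
    · rw [if_pos hBF]; exact hBF
    · rw [if_neg hBF]; exact (hstruct B hB hBF).2.2
  · intro B₁ hB₁ B₂ hB₂ heq
    dsimp only at heq
    have recov : ∀ Z : Finset ℕ, a ∈ Z → b ∉ Z → insert a ((insert b (Z.erase a)).erase b) = Z := by
      intro Z h1 h2
      rw [erase_insert (fun hc => h2 (mem_of_mem_erase hc)), insert_erase h1]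
    -- the mixed-case contradiction, as a general fact
    have hmixed : ∀ B₁' B₂', B₁' ∈ nbhd n k (upFam a b ℱ) → B₁' ∈ nbhd n k ℱ →
        B₂' ∈ powersetCard k (Icc 1 n) →
        B₂' ∉ nbhd n k ℱ → a ∈ B₂' → b ∉ B₂' → B₁' = insert b (B₂'.erase a) → False := by
      intro B₁' B₂' hs1 hf1 hp2 hn2 ha2x hb2x heq'
      obtain ⟨hBp, F₁, hF₁, hF₁B⟩ := mem_filter.1 hs1
      have hbB₁ : b ∈ B₁' := heq' ▸ mem_insert_self b _
      have hbF₁ : b ∉ F₁ := fun hc => disj_of_inter_empty hF₁B hc hbB₁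
      have hkept : F₁ ∈ ℱ := by
        rcases mem_upFam.1 hF₁ with hk | ⟨F, hF, hFm, rfl⟩
        · exact hk.1
        · have hFmv : a ∈ F ∧ b ∉ F := by
            by_contra h
            rw [up_eq_of_unmoved h] at hFm
            exact hFm hF
          exact absurd ((up_mem_iff habne hFmv).2 (Or.inr rfl)) hbF₁
      have hkept2 : up a b F₁ ∈ ℱ := by
        rcases mem_upFam.1 hF₁ with hk | ⟨F, hF, hFm, rfl⟩
        · exact hk.2
        · have hFmv : a ∈ F ∧ b ∉ F := by
            by_contra h
            rw [up_eq_of_unmoved h] at hFm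
            exact hFm hF
          exact absurd ((up_mem_iff habne hFmv).2 (Or.inr rfl)) hbF₁
      -- x ∈ B₂', x ≠ a implies x ∈ B₁'
      have hB₂B₁ : ∀ x, x ∈ B₂' → x ≠ a → x ∈ B₁' := by
        intro x hx hxa
        rw [heq', mem_insert]
        exact Or.inr (mem_erase.2 ⟨hxa, hx⟩)
      by_cases haF₁ : a ∈ F₁
      · have hF₁mv : a ∈ F₁ ∧ b ∉ F₁ := ⟨haF₁, hbF₁⟩
        refine hn2 (mem_filter.2 ⟨?_, up a b F₁, hkept2, ?_⟩)
        · exact hp2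
        · rw [eq_empty_iff_forall_notMem]
          intro x hx
          rw [mem_inter] at hx
          rcases (up_mem_iff habne hF₁mv).1 hx.1 with h | rfl
          · exact disj_of_inter_empty hF₁B h.1 (hB₂B₁ x hx.2 h.2)
          · exact hb2x hx.2
      · refine hn2 (mem_filter.2 ⟨hp2, F₁, hkept, ?_⟩)
        rw [eq_empty_iff_forall_notMem]
        intro x hx
        rw [mem_inter] at hx
        have hxa : x ≠ a := fun hc => haF₁ (hc ▸ hx.1)
        exact disj_of_inter_empty hF₁B hx.1 (hB₂B₁ x hx.2 hxa)
    by_cases h1 : B₁ ∈ nbhd n k ℱ <;> by_cases h2 : B₂ ∈ nbhd n k ℱ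
    · rwa [if_pos h1, if_pos h2] at heq
    · rw [if_pos h1, if_neg h2] at heq
      obtain ⟨ha2, hb2, _⟩ := hstruct B₂ hB₂ h2
      exact absurd (hmixed B₁ B₂ hB₁ h1 (mem_filter.1 hB₂).1 h2 ha2 hb2 heq) not_false
    · rw [if_neg h1, if_pos h2] at heq
      obtain ⟨ha1, hb1, _⟩ := hstruct B₁ hB₁ h1
      exact absurd (hmixed B₂ B₁ hB₂ h2 (mem_filter.1 hB₁).1 h1 ha1 hb1 heq.symm) not_false
    · rw [if_neg h1, if_neg h2] at heq
      obtain ⟨ha1, hb1, _⟩ := hstruct B₁ hB₁ h1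
      obtain ⟨ha2, hb2, _⟩ := hstruct B₂ hB₂ h2
      calc B₁ = insert a ((insert b (B₁.erase a)).erase b) := (recov B₁ ha1 hb1).symm
        _ = insert a ((insert b (B₂.erase a)).erase b) := by rw [heq]
        _ = B₂ := recov B₂ ha2 hb2

lemma compl_compl_ground {n : ℕ} {F : Finset ℕ} (h : F ⊆ Icc 1 n) :
    Icc 1 n \ (Icc 1 n \ F) = F := by
  rw [sdiff_sdiff_right_self, inf_eq_inter, inter_eq_right.2 h]

lemma shifted_case {n k t : ℕ} {ℱ : Finset (Finset ℕ)} (hn : 2*k + t ≤ n)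
    (hg : ℱ ⊆ powersetCard (k+t) (Icc 1 n))
    (hsh : IsShiftedUp n ℱ)
    (hint : ∀ P ∈ ℱ, ∀ Q ∈ ℱ, t ≤ (P ∩ Q).card) :
    ℱ.card ≤ (nbhd n k ℱ).card := by
  classical
  set m := n - (k + t) with hm
  set τ := n - (2*k + t) with hτ
  set 𝒜 := ℱ.image (fun F => Icc 1 n \ F) with h𝒜def
  have hmemℱ : ∀ F ∈ ℱ, F ⊆ Icc 1 n ∧ F.card = k + t := by
    intro F hF
    have := hg hF
    rwa [mem_powersetCard] at this
  have hcplcard : ∀ F ∈ ℱ, (Icc 1 n \ F).card = m := by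
    intro F hF
    obtain ⟨h1, h2⟩ := hmemℱ F hF
    rw [card_sdiff_of_subset h1, Nat.card_Icc, h2]
    omega
  have h𝒜 : 𝒜 ⊆ powersetCard m (Icc 1 n) := by
    intro A hA
    obtain ⟨F, hF, rfl⟩ := mem_image.1 hA
    exact mem_powersetCard.2 ⟨sdiff_subset, hcplcard F hF⟩
  have hcard𝒜 : 𝒜.card = ℱ.card := by
    rw [h𝒜def]
    apply card_image_of_injOn
    intro X hX Y hY hXY
    rw [mem_coe] at hX hY
    dsimp only at hXY
    calc X = Icc 1 n \ (Icc 1 n \ X) := (compl_compl_ground (hmemℱ X hX).1).symm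
      _ = Icc 1 n \ (Icc 1 n \ Y) := by rw [hXY]
      _ = Y := compl_compl_ground (hmemℱ Y hY).1
  have hsh𝒜 : IsShifted n 𝒜 := by
    intro a b h1a hab hbn A hA hbA haA
    obtain ⟨F, hF, rfl⟩ := mem_image.1 hA
    have hbF : b ∉ F ∧ b ∈ Icc 1 n := by
      have := mem_sdiff.1 hbA
      exact ⟨this.2, this.1⟩
    have haF : a ∈ F := by
      by_contra haF
      exact haA (mem_sdiff.2 ⟨mem_Icc.2 ⟨h1a, by omega⟩, haF⟩)
    have hF' : insert b (F.erase a) ∈ ℱ := hsh a b h1a hab hbn F hF haF hbF.1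
    have hid : insert a ((Icc 1 n \ F).erase b) = Icc 1 n \ (insert b (F.erase a)) := by
      ext x
      simp only [mem_insert, mem_erase, mem_sdiff, mem_Icc]
      constructor
      · rintro (rfl | ⟨hxb, ⟨hx1, hx2⟩, hxF⟩)
        · refine ⟨⟨h1a, by omega⟩, ?_⟩
          rintro (rfl | ⟨h1, h2⟩)
          · exact absurd rfl (Nat.ne_of_lt hab)
          · exact h1 rfl
        · exact ⟨⟨hx1, hx2⟩, by rintro (rfl | ⟨h1, h2⟩); exacts [hxb rfl, hxF h2]⟩
      · rintro ⟨⟨hx1, hx2⟩, hx3⟩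
        by_cases hxa : x = a
        · exact Or.inl hxa
        · refine Or.inr ⟨?_, ⟨hx1, hx2⟩, ?_⟩
          · intro hxb
            exact hx3 (Or.inl hxb)
          · intro hxF
            exact hx3 (Or.inr ⟨hxa, hxF⟩)
    rw [hid]
    exact mem_image_of_mem _ hF'
  have hint𝒜 : ∀ A ∈ 𝒜, ∀ A' ∈ 𝒜, τ ≤ (A ∩ A').card := by
    intro A hA A' hA'
    obtain ⟨F, hF, rfl⟩ := mem_image.1 hA
    obtain ⟨F', hF', rfl⟩ := mem_image.1 hA'
    have hid : (Icc 1 n \ F) ∩ (Icc 1 n \ F') = Icc 1 n \ (F ∪ F') := by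
      ext x
      simp only [mem_inter, mem_sdiff, mem_union]
      tauto
    rw [hid, card_sdiff_of_subset (union_subset (hmemℱ F hF).1 (hmemℱ F' hF').1), Nat.card_Icc]
    have h1 : (F ∪ F').card + (F ∩ F').card = F.card + F'.card := card_union_add_card_inter F F'
    have h2 := hint F hF F' hF'
    have h3 := (hmemℱ F hF).2
    have h4 := (hmemℱ F' hF').2
    omega
  have h2m : 2 * m ≤ n + τ := by omega
  have hmain := katona_core h𝒜 hsh𝒜 hint𝒜 h2m
  have hmτ : m - τ = k := by omega
  rw [hmτ] at hmain
  have hsub : (powersetCard k (Icc 1 n)).filter (fun B => ∃ C ∈ 𝒜, B ⊆ C) ⊆ nbhd n k ℱ := by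
    intro B hB
    obtain ⟨hBp, C, hC, hBC⟩ := mem_filter.1 hB
    obtain ⟨F, hF, rfl⟩ := mem_image.1 hC
    refine mem_filter.2 ⟨hBp, F, hF, ?_⟩
    rw [eq_empty_iff_forall_notMem]
    intro x hx
    rw [mem_inter] at hx
    exact (mem_sdiff.1 (hBC hx.2)).2 hx.1
  calc ℱ.card = 𝒜.card := hcard𝒜.symm
    _ ≤ _ := hmain
    _ ≤ (nbhd n k ℱ).card := card_le_card hsub

lemma main_ineq {n k t : ℕ} (hn : 2*k + t ≤ n) :
    ∀ W ℱ, wsum n ℱ ≤ W → ℱ ⊆ powersetCard (k+t) (Icc 1 n) →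
    (∀ P ∈ ℱ, ∀ Q ∈ ℱ, t ≤ (P ∩ Q).card) → ℱ.card ≤ (nbhd n k ℱ).card := by
  intro W
  induction W using Nat.strong_induction_on with
  | _ W ih =>
  intro ℱ hw hg hint
  by_cases hsh : IsShiftedUp n ℱ
  · exact shifted_case hn hg hsh hint
  · unfold IsShiftedUp at hsh
    push_neg at hsh
    obtain ⟨a, b, h1a, hab, hbn, F, hF, haF, hbF, hnot⟩ := hsh
    have hmoved : up a b F ∉ ℱ := by
      rw [up_eq_of_moved ⟨haF, hbF⟩]; exact hnot
    have hlt := wsum_upFam_lt hab hbn ⟨F, hF, hmoved⟩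
    have h1 : (upFam a b ℱ).card ≤ (nbhd n k (upFam a b ℱ)).card :=
      ih (wsum n (upFam a b ℱ)) (by omega) _ le_rfl
        (upFam_ground h1a hab hbn hg)
        (upFam_intersecting (Nat.ne_of_lt hab) hint)
    have h2 := nbhd_upFam_le (ℱ := ℱ) (k := k) h1a hab hbn
    have h3 := card_upFam (ℱ := ℱ) (a := a) (b := b) (Nat.ne_of_lt hab)
    omega

end Frankl

theorem frankl_t_intersecting_bound
    (t k n : ℕ) (hk : 1 ≤ k) (hn : 2 * k + t ≤ n)
    (F G : Finset (Finset ℕ))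
    (hF : F ⊆ powersetCard (k + t) (Icc 1 n))
    (hG : G ⊆ powersetCard k (Icc 1 n))
    (hcross : ∀ A ∈ F, ∀ B ∈ G, (A ∩ B).Nonempty)
    (hint : ∀ A ∈ F, ∀ A' ∈ F, t ≤ (A ∩ A').card) :
    F.card + G.card ≤ Nat.choose n k := by
  classical
  have h1 : F.card ≤ (Frankl.nbhd n k F).card :=
    Frankl.main_ineq hn (Frankl.wsum n F) F le_rfl hF hint
  have hdisj : Disjoint G (Frankl.nbhd n k F) := by
    rw [disjoint_left]
    intro B hB hNB
    obtain ⟨hBp, F', hF', hFB⟩ := mem_filter.1 hNB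
    obtain ⟨x, hx⟩ := hcross F' hF' B hB
    exact notMem_empty x (hFB ▸ hx)
  have hsubU : G ∪ Frankl.nbhd n k F ⊆ powersetCard k (Icc 1 n) :=
    union_subset hG (filter_subset _ _)
  have h2 := card_le_card hsubU
  rw [card_union_of_disjoint hdisj] at h2
  have hpc : (powersetCard k (Icc 1 n)).card = n.choose k := by
    rw [card_powersetCard, Nat.card_Icc]
    simp
  omega
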